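/- For every matrix A ∈ ℝ^{m×d} with rank r, there exist matrices U ∈ ℝ^{m×(r+1)} and V ∈ ℝ^{(r+1)×d} with all entries of V nonnegative such that A = UV. Equivalently, the nonnegative column rank satisfies nncr(A) ≤ rank(A) + 1. -/

import Mathlib

open Matrix

/-- Rank factorization: A = B * C with inner dimension rank A. -/
lemma exists_rank_factorization {m d : ℕ} (A : Matrix (Fin m) (Fin d) ℝ) :
    ∃ (B : Matrix (Fin m) (Fin A.rank) ℝ) (C : Matrix (Fin A.rank) (Fin d) ℝ),
      ∀ i k, A i k = ∑ j, B i j * C j k := by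
  set W := LinearMap.range A.mulVecLin with hW
  have hfr : Module.finrank ℝ W = A.rank := rfl
  let b : Module.Basis (Fin A.rank) ℝ W := Module.finBasisOfFinrankEq ℝ W hfr
  have hcol : ∀ k : Fin d, (fun i => A i k) ∈ W := by
    intro k
    refine ⟨Pi.single k 1, ?_⟩
    funext i
    simp [Matrix.mulVecLin, Matrix.mulVec, dotProduct, Pi.single_apply]
  refine ⟨fun i j => (b j : Fin m → ℝ) i,
    fun j k => b.repr ⟨fun i => A i k, hcol k⟩ j, ?_⟩
  intro i k
  have := b.sum_repr ⟨fun i => A i k, hcol k⟩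
  have h2 := congrFun (congrArg (Subtype.val) this) i
  simp only [Submodule.coe_sum, Finset.sum_apply, SetLike.val_smul, Pi.smul_apply,
    smul_eq_mul] at h2
  rw [← h2]
  exact Finset.sum_congr rfl (fun j _ => mul_comm _ _)

/-- every real matrix `A` of rank `r` admits a factorization `A = U * V` with
inner dimension `r + 1` where all entries of `V` are nonnegative; i.e. `nncr(A) ≤ rank(A) + 1`. -/
theorem nncr_le_rank_add_one {m d : ℕ} (A : Matrix (Fin m) (Fin d) ℝ) :
    ∃ (U : Matrix (Fin m) (Fin (A.rank + 1)) ℝ) (V : Matrix (Fin (A.rank + 1)) (Fin d) ℝ),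
      (∀ i j, 0 ≤ V i j) ∧ A = U * V := by
  obtain ⟨B, C, hBC⟩ := exists_rank_factorization A
  let t : Fin A.rank → ℝ := fun j => ∑ k, |C j k|
  have ht : ∀ j k, 0 ≤ C j k + t j := by
    intro j k
    have h1 : |C j k| ≤ t j :=
      Finset.single_le_sum (f := fun k => |C j k|) (fun _ _ => abs_nonneg _)
        (Finset.mem_univ k)
    have := neg_abs_le (C j k)
    linarith
  refine ⟨fun i p => if h : (p : ℕ) < A.rank then B i ⟨p, h⟩ else -(∑ j, B i j * t j),
    fun p k => if h : (p : ℕ) < A.rank then C ⟨p, h⟩ k + t ⟨p, h⟩ else 1, ?_, ?_⟩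
  · intro p k
    by_cases h : (p : ℕ) < A.rank
    · simp only [dif_pos h]; exact ht _ _
    · simp [dif_neg h]
  · ext i k
    erw [Matrix.mul_apply]
    rw [Fin.sum_univ_castSucc]
    simp only [Fin.coe_castSucc, Fin.is_lt, dif_pos, Fin.val_last, lt_self_iff_false,
      dif_neg, not_false_iff, Fin.eta]
    rw [hBC i k]
    simp only [mul_add, Finset.sum_add_distrib]
    ring
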